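/- For all n, the number of involutions of [n] I-avoiding the pattern 2143 (as a fixed-point-free involution pattern, i.e., requiring the occurrence to be a union of cycles) equals Σ_{k=0}^{⌊n/2⌋} C(n,2k)·k!. -/

import Mathlib

open Equiv Finset Function

section Aux
variable {n k : ℕ}

/-- the "cross" involution on `Fin k ⊕ Fin k` determined by `σ`. -/
def crossPerm (σ : Perm (Fin k)) : Perm (Fin k ⊕ Fin k) :=
  (Equiv.sumComm _ _).trans (Equiv.sumCongr σ.symm σ)

@[simp] lemma crossPerm_inl (σ : Perm (Fin k)) (i : Fin k) :
    crossPerm σ (Sum.inl i) = Sum.inr (σ i) := rfl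

@[simp] lemma crossPerm_inr (σ : Perm (Fin k)) (j : Fin k) :
    crossPerm σ (Sum.inr j) = Sum.inl (σ.symm j) := rfl

lemma crossPerm_invol (σ : Perm (Fin k)) (z : Fin k ⊕ Fin k) :
    crossPerm σ (crossPerm σ z) = z := by
  cases z <;> simp

lemma crossPerm_ne (σ : Perm (Fin k)) (z : Fin k ⊕ Fin k) : crossPerm σ z ≠ z := by
  cases z <;> simp

/-- the equivalence `Fin k ⊕ Fin k ≃ S` for a finset of card `k + k`. -/
def sumEquiv (S : Finset (Fin n)) (hS : S.card = k + k) : Fin k ⊕ Fin k ≃ S :=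
  finSumFinEquiv.trans (S.orderIsoOfFin hS).toEquiv

lemma sumEquiv_lt (S : Finset (Fin n)) (hS : S.card = k + k) (i j : Fin k) :
    ((sumEquiv S hS (Sum.inl i)) : Fin n) < (sumEquiv S hS (Sum.inr j) : Fin n) := by
  have : (Fin.castAdd k i) < (Fin.natAdd k j) := by
    simp [Fin.lt_def]; omega
  simpa [_root_.sumEquiv] using (S.orderIsoOfFin hS).lt_iff_lt.mpr this

/-- the constructed involution as a function. -/
def mkFun (S : Finset (Fin n)) (hS : S.card = k + k) (σ : Perm (Fin k)) : Fin n → Fin n :=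
  fun x => if h : x ∈ S then (sumEquiv S hS (crossPerm σ ((sumEquiv S hS).symm ⟨x, h⟩)) : Fin n)
    else x

lemma mkFun_of_not_mem (S : Finset (Fin n)) (hS : S.card = k + k) (σ : Perm (Fin k))
    {x : Fin n} (h : x ∉ S) : mkFun S hS σ x = x := by simp [mkFun, h]

lemma mkFun_apply_coe (S : Finset (Fin n)) (hS : S.card = k + k) (σ : Perm (Fin k))
    (z : Fin k ⊕ Fin k) :
    mkFun S hS σ (sumEquiv S hS z : Fin n) = (sumEquiv S hS (crossPerm σ z) : Fin n) := by
  have h : (sumEquiv S hS z : Fin n) ∈ S := (sumEquiv S hS z).2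
  have h2 : (sumEquiv S hS).symm ⟨(sumEquiv S hS z : Fin n), h⟩ = z := by
    rw [show (⟨(sumEquiv S hS z : Fin n), h⟩ : S) = sumEquiv S hS z from rfl]
    exact Equiv.symm_apply_apply _ _
  simp [mkFun, h, h2]

lemma mkFun_invol (S : Finset (Fin n)) (hS : S.card = k + k) (σ : Perm (Fin k)) :
    Function.Involutive (mkFun S hS σ) := by
  intro x
  by_cases h : x ∈ S
  · have hx : x = (sumEquiv S hS ((sumEquiv S hS).symm ⟨x, h⟩) : Fin n) := by
      simp
    rw [hx, mkFun_apply_coe, mkFun_apply_coe, crossPerm_invol]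
  · rw [mkFun_of_not_mem _ _ _ h, mkFun_of_not_mem _ _ _ h]

lemma mkFun_ne (S : Finset (Fin n)) (hS : S.card = k + k) (σ : Perm (Fin k))
    {x : Fin n} (h : x ∈ S) : mkFun S hS σ x ≠ x := by
  have hx : x = (sumEquiv S hS ((sumEquiv S hS).symm ⟨x, h⟩) : Fin n) := by simp
  rw [hx, mkFun_apply_coe]
  intro hc
  exact crossPerm_ne σ _ ((sumEquiv S hS).injective (Subtype.ext hc))

lemma mkFun_lt_iff (S : Finset (Fin n)) (hS : S.card = k + k) (σ : Perm (Fin k))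
    {x : Fin n} (h : x ∈ S) :
    x < mkFun S hS σ x ↔ ∃ i : Fin k, x = (sumEquiv S hS (Sum.inl i) : Fin n) := by
  have hx : x = (sumEquiv S hS ((sumEquiv S hS).symm ⟨x, h⟩) : Fin n) := by simp
  constructor
  · intro hlt
    rcases hz : (sumEquiv S hS).symm ⟨x, h⟩ with i | j
    · exact ⟨i, by rw [hx, hz]⟩
    · exfalso
      rw [hx, hz] at hlt
      rw [mkFun_apply_coe] at hlt
      simp only [crossPerm_inr] at hlt
      exact absurd hlt (not_lt.2 (le_of_lt (sumEquiv_lt S hS _ _)))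
  · rintro ⟨i, rfl⟩
    rw [mkFun_apply_coe]
    simpa using sumEquiv_lt S hS i (σ i)

lemma mkFun_avoids (S : Finset (Fin n)) (hS : S.card = k + k) (σ : Perm (Fin k)) :
    ∀ a c : Fin n, a < mkFun S hS σ a → c < mkFun S hS σ c → ¬ mkFun S hS σ a < c := by
  intro a c ha hc
  have haS : a ∈ S := by
    by_contra h; rw [mkFun_of_not_mem _ _ _ h] at ha; exact lt_irrefl _ ha
  have hcS : c ∈ S := by
    by_contra h; rw [mkFun_of_not_mem _ _ _ h] at hc; exact lt_irrefl _ hc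
  obtain ⟨i, rfl⟩ := (mkFun_lt_iff S hS σ haS).1 ha
  obtain ⟨i', rfl⟩ := (mkFun_lt_iff S hS σ hcS).1 hc
  rw [mkFun_apply_coe]
  simp only [crossPerm_inl]
  exact not_lt.2 (le_of_lt (sumEquiv_lt S hS i' (σ i)))

end Aux

section Map
variable {n : ℕ}

/-- the data indexing avoiding involutions. -/
def IData (n : ℕ) : Type :=
  Σ k : Fin (n / 2 + 1), {S : Finset (Fin n) // S.card = k + k} × Perm (Fin (k : ℕ))

/-- the target subtype. -/
def ITarget (n : ℕ) : Type :=
  {τ : Perm (Fin n) // Function.Involutive ⇑τ ∧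
      ∀ a c : Fin n, a < τ a → c < τ c → ¬ τ a < c}

def Fmap (d : IData n) : ITarget n :=
  ⟨(mkFun_invol d.2.1.1 d.2.1.2 d.2.2).toPerm, by
    constructor
    · intro x
      simpa using mkFun_invol d.2.1.1 d.2.1.2 d.2.2 x
    · simpa using mkFun_avoids d.2.1.1 d.2.1.2 d.2.2⟩

lemma Fmap_coe (d : IData n) : ⇑(Fmap d).1 = mkFun d.2.1.1 d.2.1.2 d.2.2 := rfl

lemma support_Fmap (d : IData n) {x : Fin n} : (Fmap d).1 x ≠ x ↔ x ∈ d.2.1.1 := by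
  rw [Fmap_coe]
  constructor
  · intro h
    by_contra hx
    exact h (mkFun_of_not_mem _ _ _ hx)
  · intro h
    exact mkFun_ne _ _ _ h

lemma Fmap_injective : Function.Injective (Fmap (n := n)) := by
  rintro ⟨⟨k, hk⟩, ⟨S, hS⟩, σ⟩ ⟨⟨k', hk'⟩, ⟨S', hS'⟩, σ'⟩ h
  have hSS : S = S' := by
    ext x
    rw [← support_Fmap ⟨⟨k, hk⟩, ⟨S, hS⟩, σ⟩, ← support_Fmap ⟨⟨k', hk'⟩, ⟨S', hS'⟩, σ'⟩, h]
  have hkk : k = k' := by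
    have h2 := hSS ▸ hS'
    have h1 := hS
    simp only [Fin.val_mk] at h1 h2
    omega
  subst hkk
  subst hSS
  have hfun : mkFun S hS σ = mkFun S hS' σ' := by
    have := congrArg (fun t : ITarget n => ⇑t.1) h
    exact this
  have hσ : σ = σ' := by
    ext i
    have h1 := congrFun hfun (sumEquiv S hS (Sum.inl i) : Fin n)
    have hSeq : hS = hS' := rfl
    rw [mkFun_apply_coe] at h1
    rw [show hS' = hS from rfl] at h1
    rw [mkFun_apply_coe] at h1
    simp only [crossPerm_inl] at h1
    have := (sumEquiv S hS).injective (Subtype.ext h1)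
    exact congrArg Fin.val (by simpa using this)
  subst hσ
  rfl

lemma Fmap_surjective : Function.Surjective (Fmap (n := n)) := by
  classical
  rintro ⟨τ, hinv, hav⟩
  set S : Finset (Fin n) := univ.filter (fun x => τ x ≠ x) with hSdef
  have memS : ∀ x, x ∈ S ↔ τ x ≠ x := by intro x; simp [hSdef]
  have hτS : ∀ x, x ∈ S → τ x ∈ S := by
    intro x hx
    rw [memS] at *
    intro h
    have h2 : τ (τ x) = x := hinv x
    exact hx (h2.symm.trans h).symm
  set L : Finset (Fin n) := S.filter (fun x => x < τ x) with hLdef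
  set H : Finset (Fin n) := S.filter (fun x => τ x < x) with hHdef
  have memL : ∀ x, x ∈ L ↔ x < τ x := by
    intro x
    simp only [hLdef, mem_filter, memS, and_iff_right_iff_imp]
    exact fun h => ne_of_gt h
  have memH : ∀ x, x ∈ H ↔ τ x < x := by
    intro x
    simp only [hHdef, mem_filter, memS, and_iff_right_iff_imp]
    exact fun h => ne_of_lt h
  have disjLH : ∀ x, x ∈ L → x ∈ H → False := by
    intro x hl hh
    exact absurd ((memL x).1 hl) (not_lt.2 (le_of_lt ((memH x).1 hh)))
  have memSLH : ∀ x, x ∈ S ↔ x ∈ L ∨ x ∈ H := by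
    intro x
    rw [memS, memL, memH]
    rcases lt_trichotomy x (τ x) with h | h | h
    · simp [h, ne_of_gt h]
    · simp [h.symm, h ▸ lt_irrefl x]
    · simp [h, ne_of_lt h]
  have cardLH : L.card = H.card := by
    apply Finset.card_bij (fun x _ => τ x)
    · intro a ha
      rw [memH, hinv a]
      exact (memL a).1 ha
    · intro a _ b _ hab
      exact hinv.injective hab
    · intro b hb
      refine ⟨τ b, ?_, (hinv b)⟩
      rw [memL, hinv b]
      exact (memH b).1 hb
  set k := L.card with hkdef
  have hS : S.card = k + k := by
    have hdisj : Disjoint L H := by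
      rw [Finset.disjoint_left]
      intro x hx hx'
      exact disjLH x hx hx'
    have hunion : S = L ∪ H := by
      ext x
      rw [memSLH, Finset.mem_union]
    rw [hunion, Finset.card_union_of_disjoint hdisj, ← cardLH]
  have hkn : k < n / 2 + 1 := by
    have h1 : S.card ≤ n := by
      simpa using Finset.card_le_univ S
    omega
  have hLH : ∀ l ∈ L, ∀ h ∈ H, l < h := by
    intro l hl h hh
    have h1 : l < τ l := (memL l).1 hl
    have h2 : τ h < h := (memH h).1 hh
    have h3 : τ h < τ (τ h) := by rw [hinv h]; exact h2
    have h4 : ¬ τ (τ h) < l := hav (τ h) l h3 h1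
    rw [hinv h] at h4
    have h5 : l ≠ h := by
      intro he
      exact absurd (he ▸ h1) (not_lt.2 (le_of_lt (he ▸ h2)))
    exact lt_of_le_of_ne (not_lt.1 h4) h5
  set e := S.orderIsoOfFin hS with hedef
  have cardBelow : ∀ i : Fin (k + k),
      (S.filter (fun x => x < (e i : Fin n))).card = i.val := by
    intro i
    rw [← Fin.card_Iio i]
    apply (Finset.card_bij (fun j _ => ((e j : S) : Fin n)) ?_ ?_ ?_).symm
    · intro j hj
      rw [Finset.mem_filter]
      exact ⟨(e j).2, by rw [Subtype.coe_lt_coe]; exact e.lt_iff_lt.2 (Finset.mem_Iio.1 hj)⟩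
    · intro a _ b _ hab
      exact e.injective (Subtype.ext hab)
    · intro x hx
      rw [Finset.mem_filter] at hx
      refine ⟨e.symm ⟨x, hx.1⟩, ?_, by simp⟩
      rw [Finset.mem_Iio, ← e.lt_iff_lt, e.apply_symm_apply]
      rw [Subtype.mk_lt_mk]
      exact hx.2
  have cardAbove : ∀ i : Fin (k + k),
      (S.filter (fun x => (e i : Fin n) < x)).card = k + k - 1 - i.val := by
    intro i
    rw [← Fin.card_Ioi i]
    apply (Finset.card_bij (fun j _ => ((e j : S) : Fin n)) ?_ ?_ ?_).symm
    · intro j hj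
      rw [Finset.mem_filter]
      exact ⟨(e j).2, by rw [Subtype.coe_lt_coe]; exact e.lt_iff_lt.2 (Finset.mem_Ioi.1 hj)⟩
    · intro a _ b _ hab
      exact e.injective (Subtype.ext hab)
    · intro x hx
      rw [Finset.mem_filter] at hx
      refine ⟨e.symm ⟨x, hx.1⟩, ?_, by simp⟩
      rw [Finset.mem_Ioi, ← e.lt_iff_lt, e.apply_symm_apply]
      rw [Subtype.mk_lt_mk]
      exact hx.2
  have lowIff : ∀ i : Fin (k + k), ((e i : S) : Fin n) ∈ L ↔ i.val < k := by
    intro i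
    constructor
    · intro hl
      by_contra hge
      have hsub : H ⊆ S.filter (fun x => (e i : Fin n) < x) := by
        intro h hh
        rw [Finset.mem_filter]
        exact ⟨(Finset.filter_subset _ _) hh, hLH _ hl _ hh⟩
      have := Finset.card_le_card hsub
      rw [cardAbove i, ← cardLH] at this
      have := i.isLt
      omega
    · intro hlt
      have hiS : ((e i : S) : Fin n) ∈ S := (e i).2
      rcases (memSLH _).1 hiS with h | h
      · exact h
      · exfalso
        have hsub : L ⊆ S.filter (fun x => x < (e i : Fin n)) := by
          intro l hl
          rw [Finset.mem_filter]
          exact ⟨(Finset.filter_subset _ _) hl, hLH _ hl _ h⟩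
        have := Finset.card_le_card hsub
        rw [cardBelow i] at this
        omega
  set m : Fin (k + k) → Fin (k + k) :=
    fun i => e.symm ⟨τ ((e i : S) : Fin n), hτS _ (e i).2⟩ with hmdef
  have h_em : ∀ i, ((e (m i) : S) : Fin n) = τ ((e i : S) : Fin n) := by
    intro i
    rw [hmdef]
    simp
  have m_invol : ∀ i, m (m i) = i := by
    intro i
    apply e.injective
    apply Subtype.ext
    rw [h_em, h_em, hinv]
  have m_high : ∀ i : Fin (k + k), i.val < k → k ≤ (m i).val := by
    intro i hi
    by_contra hc
    have h1 : ((e i : S) : Fin n) ∈ L := (lowIff i).2 hi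
    have h2 : ((e (m i) : S) : Fin n) ∈ L := (lowIff (m i)).2 (not_le.1 hc)
    rw [h_em] at h2
    have h3 : τ ((e i : S) : Fin n) ∈ H := by
      rw [memH, hinv]
      exact (memL _).1 h1
    exact disjLH _ h2 h3
  have m_low : ∀ i : Fin (k + k), k ≤ i.val → (m i).val < k := by
    intro i hi
    rw [← lowIff, h_em]
    have h1 : ((e i : S) : Fin n) ∈ H := by
      rcases (memSLH _).1 (e i).2 with h | h
      · exact absurd ((lowIff i).1 h) (not_lt.2 hi)
      · exact h
    rw [memL, hinv]
    exact (memH _).1 h1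
  set σf : Fin k → Fin k := fun i =>
    ⟨(m (Fin.castAdd k i)).val - k, by
      have h1 := (m (Fin.castAdd k i)).isLt
      have h2 := m_high (Fin.castAdd k i) (by simpa using i.isLt)
      omega⟩ with hσfdef
  set σg : Fin k → Fin k := fun j =>
    ⟨(m (Fin.natAdd k j)).val, m_low (Fin.natAdd k j) (by simp)⟩ with hσgdef
  have key1 : ∀ i : Fin k, Fin.natAdd k (σf i) = m (Fin.castAdd k i) := by
    intro i
    apply Fin.ext
    have h2 := m_high (Fin.castAdd k i) (by simpa using i.isLt)
    simp only [Fin.coe_natAdd, hσfdef]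
    omega
  have key2 : ∀ j : Fin k, Fin.castAdd k (σg j) = m (Fin.natAdd k j) := by
    intro j
    apply Fin.ext
    simp [hσgdef]
  have hleft : ∀ i, σg (σf i) = i := by
    intro i
    apply Fin.ext
    simp only [hσgdef, key1, m_invol]
    simp
  have hright : ∀ j, σf (σg j) = j := by
    intro j
    apply Fin.ext
    simp only [hσfdef, key2, m_invol]
    simp
  set σ : Perm (Fin k) := ⟨σf, σg, hleft, hright⟩ with hσdef
  refine ⟨⟨⟨k, hkn⟩, ⟨S, hS⟩, σ⟩, ?_⟩
  apply Subtype.ext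
  apply Equiv.ext
  intro x
  show mkFun S hS σ x = τ x
  have hsum : ∀ z, (sumEquiv S hS z : Fin n) = ((e (finSumFinEquiv z) : S) : Fin n) :=
    fun z => rfl
  by_cases hx : x ∈ S
  · have hxe : x = ((e (e.symm ⟨x, hx⟩) : S) : Fin n) := by simp
    set i := e.symm ⟨x, hx⟩ with hidef
    rcases lt_or_ge i.val k with hik | hik
    · set i0 : Fin k := ⟨i.val, hik⟩ with hi0def
      have hcast : Fin.castAdd k i0 = i := by apply Fin.ext; simp [hi0def]
      have hxz : x = (sumEquiv S hS (Sum.inl i0) : Fin n) := by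
        rw [hsum, finSumFinEquiv_apply_left, hcast]; exact hxe
      rw [hxz, mkFun_apply_coe]
      simp only [crossPerm_inl]
      have hσi : σ i0 = σf i0 := rfl
      rw [hsum, finSumFinEquiv_apply_right, hσi, key1, hcast, h_em]
      rw [hsum, finSumFinEquiv_apply_left, hcast]
    · set i0 : Fin k := ⟨i.val - k, by have := i.isLt; omega⟩ with hi0def
      have hcast : Fin.natAdd k i0 = i := by
        apply Fin.ext; simp only [Fin.coe_natAdd, hi0def]; omega
      have hxz : x = (sumEquiv S hS (Sum.inr i0) : Fin n) := by
        rw [hsum, finSumFinEquiv_apply_right, hcast]; exact hxe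
      rw [hxz, mkFun_apply_coe]
      simp only [crossPerm_inr]
      have hσi : σ.symm i0 = σg i0 := rfl
      rw [hsum, finSumFinEquiv_apply_left, hσi, key2, hcast, h_em]
      rw [hsum, finSumFinEquiv_apply_right, hcast]
  · rw [mkFun_of_not_mem _ _ _ hx]
    rw [memS, not_not] at hx
    exact hx.symm

end Map

theorem involutions_Iavoiding_2143_card (n : ℕ) :
    Nat.card {τ : Equiv.Perm (Fin n) // Function.Involutive ⇑τ ∧
      ∀ a c : Fin n, a < τ a → c < τ c → ¬ τ a < c} =
    ∑ k ∈ Finset.range (n / 2 + 1), Nat.choose n (2 * k) * Nat.factorial k := by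
  classical
  have h1 : Nat.card (ITarget n) = Nat.card (IData n) :=
    (Nat.card_eq_of_bijective Fmap ⟨Fmap_injective, Fmap_surjective⟩).symm
  have h2 : Nat.card (IData n) =
      ∑ k ∈ Finset.range (n / 2 + 1), Nat.choose n (2 * k) * Nat.factorial k := by
    rw [show IData n = (Σ k : Fin (n / 2 + 1),
        {S : Finset (Fin n) // S.card = (k : ℕ) + (k : ℕ)} × Perm (Fin (k : ℕ))) from rfl]
    rw [Nat.card_eq_fintype_card, Fintype.card_sigma]
    rw [Fin.sum_univ_eq_sum_range (fun k =>
      Fintype.card ({S : Finset (Fin n) // S.card = k + k} × Perm (Fin k)))]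
    refine Finset.sum_congr rfl fun k _ => ?_
    rw [Fintype.card_prod, Fintype.card_finset_len, Fintype.card_perm, Fintype.card_fin,
      Fintype.card_fin, two_mul]
  exact h1.trans h2
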